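/- For any locally integrable function s : [1, ∞) → ℂ, any real λ > 1 and any t > 1, the logarithmic mean τ(t) := (1/log t) ∫₁ᵗ s(u)/u du satisfies the representation s(t) − τ(t) = (λ/(λ−1))(τ(t^λ) − τ(t)) − (1/((λ−1) log t)) ∫ₜ^{t^λ} (s(u) − s(t))/u du. -/

import Mathlib

open Filter MeasureTheory Set

lemma aux_alg (A B st L lc : ℂ) (hL : L ≠ 0) (hlc : lc ≠ 0) (hl1 : lc - 1 ≠ 0) :
    st - L⁻¹ * A = lc / (lc - 1) * ((lc * L)⁻¹ * (A + B) - L⁻¹ * A)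
      - ((lc - 1) * L)⁻¹ * (B - st * ((lc - 1) * L)) := by
  have hx : L⁻¹ * L = 1 := inv_mul_cancel₀ hL
  have hy : lc⁻¹ * lc = 1 := inv_mul_cancel₀ hlc
  have hz : (lc - 1)⁻¹ * (lc - 1) = 1 := inv_mul_cancel₀ hl1
  have hw : ((lc - 1) * L)⁻¹ * ((lc - 1) * L) = 1 :=
    inv_mul_cancel₀ (mul_ne_zero hl1 hL)
  linear_combination (-((lc - 1)⁻¹ * L⁻¹ * (A + B))) * hy
    + (L⁻¹ * A - st * L⁻¹ * L) * hz + (-st) * hx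
    + (st * L * (lc - 1) - B) * ( -(L⁻¹ * (lc - 1)⁻¹) * hw
        + ((lc - 1) * L)⁻¹ * L⁻¹ * L * hz + ((lc - 1) * L)⁻¹ * hx )

theorem lemma1_part_i
    (s : ℝ → ℂ) (hs : ∀ t : ℝ, IntegrableOn s (Icc 1 t))
    (τ : ℝ → ℂ)
    (hτ : ∀ t : ℝ, τ t = ((Real.log t : ℂ))⁻¹ * ∫ u in Ioc (1:ℝ) t, s u / (u : ℂ))
    (l t : ℝ) (hl : 1 < l) (ht : 1 < t) :
    s t - τ t = ((l / (l - 1) : ℝ) : ℂ) * (τ (t ^ l) - τ t)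
      - (((l - 1) * Real.log t : ℝ) : ℂ)⁻¹ *
        ∫ u in Ioc t (t ^ l), (s u - s t) / (u : ℂ) := by
  have ht0 : (0:ℝ) < t := by linarith
  have htl : t < t ^ l := by
    calc t = t ^ (1:ℝ) := (Real.rpow_one t).symm
    _ < t ^ l := Real.rpow_lt_rpow_of_exponent_lt ht hl
  have hlog : Real.log (t ^ l) = l * Real.log t := Real.log_rpow ht0 l
  have hLpos : 0 < Real.log t := Real.log_pos ht
  have hL : (Real.log t : ℂ) ≠ 0 := by
    exact_mod_cast Complex.ofReal_ne_zero.mpr (ne_of_gt hLpos)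
  have hl1 : ((l:ℂ) - 1) ≠ 0 := by
    have : (l:ℝ) - 1 ≠ 0 := by linarith
    exact_mod_cast fun h => this (by exact_mod_cast h)
  -- integrability of s u / u on Ioc 1 x
  have hint : ∀ x : ℝ, IntegrableOn (fun u => s u / (u:ℂ)) (Ioc 1 x) := by
    intro x
    have h1 : IntegrableOn s (Ioc 1 x) := (hs x).mono_set Ioc_subset_Icc_self
    have hm : AEStronglyMeasurable (fun u : ℝ => ((u:ℂ))⁻¹)
        (volume.restrict (Ioc (1:ℝ) x)) :=
      Measurable.aestronglyMeasurable (by measurability)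
    have hb : ∀ᵐ u : ℝ ∂(volume.restrict (Ioc (1:ℝ) x)), ‖((u:ℂ))⁻¹‖ ≤ 1 := by
      filter_upwards [ae_restrict_mem measurableSet_Ioc] with u hu
      rw [norm_inv, Complex.norm_real]
      have : (1:ℝ) ≤ u := le_of_lt hu.1
      rw [Real.norm_eq_abs, abs_of_pos (by linarith)]
      exact inv_le_one_of_one_le₀ this
    have := Integrable.bdd_mul (c := 1) h1 hm hb
    simpa [div_eq_mul_inv, mul_comm, IntegrableOn] using this
  have hintB : IntegrableOn (fun u => s u / (u:ℂ)) (Ioc t (t ^ l)) :=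
    (hint (t ^ l)).mono_set (Ioc_subset_Ioc (by linarith) le_rfl)
  -- inverse integrable on Ioc t (t^l)
  have hcont : IntegrableOn (fun u : ℝ => ((u:ℂ))⁻¹) (Ioc t (t ^ l)) := by
    have hco : ContinuousOn (fun u : ℝ => ((u:ℂ))⁻¹) (Icc t (t ^ l)) := by
      apply ContinuousOn.inv₀ (Complex.continuous_ofReal.continuousOn)
      intro u hu
      exact_mod_cast ne_of_gt (lt_of_lt_of_le ht0 hu.1)
    exact hco.integrableOn_Icc.mono_set Ioc_subset_Icc_self
  -- compute ∫ inverse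
  have hinv : (∫ u in Ioc t (t ^ l), ((u:ℂ))⁻¹) = (((l - 1) * Real.log t : ℝ) : ℂ) := by
    have h1 : (∫ u in Ioc t (t ^ l), ((u:ℂ))⁻¹)
        = ((∫ u in Ioc t (t ^ l), (u:ℝ)⁻¹ : ℝ) : ℂ) := by
      have h0 := integral_ofReal (𝕜 := ℂ) (f := fun u : ℝ => u⁻¹)
        (μ := volume.restrict (Ioc t (t ^ l)))
      simpa using h0
    rw [h1]
    have h2 : (∫ u in Ioc t (t ^ l), (u:ℝ)⁻¹) = Real.log (t ^ l / t) := by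
      rw [← intervalIntegral.integral_of_le htl.le]
      apply integral_inv
      intro h
      rcases h with ⟨h1', h2'⟩
      simp only [min_def] at h1'
      split_ifs at h1' <;> linarith
    rw [h2, Real.log_div (by positivity) (ne_of_gt ht0), hlog]
    push_cast; ring
  -- split numerator integral
  have hsplit : (∫ u in Ioc (1:ℝ) (t ^ l), s u / (u:ℂ))
      = (∫ u in Ioc (1:ℝ) t, s u / (u:ℂ)) + (∫ u in Ioc t (t ^ l), s u / (u:ℂ)) := by
    rw [← setIntegral_union (Ioc_disjoint_Ioc_of_le le_rfl) measurableSet_Ioc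
      ((hint (t ^ l)).mono_set (Ioc_subset_Ioc le_rfl htl.le)) hintB,
      Ioc_union_Ioc_eq_Ioc ht.le htl.le]
  -- compute the last integral
  have hlast : (∫ u in Ioc t (t ^ l), (s u - s t) / (u:ℂ))
      = (∫ u in Ioc t (t ^ l), s u / (u:ℂ)) - s t * (((l - 1) * Real.log t : ℝ) : ℂ) := by
    have : (∫ u in Ioc t (t ^ l), (s u - s t) / (u:ℂ))
        = (∫ u in Ioc t (t ^ l), (s u / (u:ℂ) - s t * ((u:ℂ))⁻¹)) := by
      apply setIntegral_congr_fun measurableSet_Ioc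
      intro u _; field_simp
    rw [this, integral_sub hintB (hcont.const_mul (s t)),
      integral_const_mul, hinv]
  simp only [hτ]
  rw [hsplit, hlast, hlog]
  have hl0 : (l:ℂ) ≠ 0 := by
    have : (0:ℝ) < l := by linarith
    exact_mod_cast ne_of_gt this
  push_cast
  exact aux_alg _ _ _ _ _ hL hl0 hl1
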